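/- arXiv:gr-qc/9306020 — 3 statements merged into one kernel-verified Lean document; each statement's English description precedes it below -/
import Mathlib

section
/- Let ε > 0, C ≥ 0, r ≥ ε, and let w, w̃ > 0, F, F̃ ∈ [0, C]. With u² := w² + F/r² and ũ² := w̃² + F̃/r², one has w·w̃ − √(1+u²)·w̃²/√(1+ũ²) ≤ (1 + C·ε⁻²) · w·w̃/(1+w̃²). -/
set_option maxHeartbeats 1000000

open Real

theorem integrand_upper_bound
    (ε C r w w' F F' u u' : ℝ)
    (hε : 0 < ε) (hC : 0 ≤ C) (hr : ε ≤ r)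
    (hw : 0 < w) (hw' : 0 < w')
    (hF : F ∈ Set.Icc 0 C) (hF' : F' ∈ Set.Icc 0 C)
    (hu : u ^ 2 = w ^ 2 + F / r ^ 2) (hu' : u' ^ 2 = w' ^ 2 + F' / r ^ 2) :
    w * w' - Real.sqrt (1 + u ^ 2) * w' ^ 2 / Real.sqrt (1 + u' ^ 2) ≤
      (1 + C * ε⁻¹ ^ 2) * (w * w' / (1 + w' ^ 2)) := by
  obtain ⟨hF0, hFC⟩ := hF
  obtain ⟨hF0', hFC'⟩ := hF'
  have hr0 : 0 < r := hε.trans_le hr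
  set A := Real.sqrt (1 + u ^ 2) with hAdef
  set B := Real.sqrt (1 + u' ^ 2) with hBdef
  have hA2 : A ^ 2 = 1 + u ^ 2 := Real.sq_sqrt (by nlinarith [sq_nonneg u])
  have hB2 : B ^ 2 = 1 + u' ^ 2 := Real.sq_sqrt (by nlinarith [sq_nonneg u'])
  have hA0 : 0 ≤ A := Real.sqrt_nonneg _
  have hB0 : 0 ≤ B := Real.sqrt_nonneg _
  have hA1 : 1 ≤ A := by nlinarith [sq_nonneg (A - 1), sq_nonneg u]
  have hB1 : 1 ≤ B := by nlinarith [sq_nonneg (B - 1), sq_nonneg u']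
  have hBpos : 0 < B := lt_of_lt_of_le one_pos hB1
  have hrε : ε ^ 2 ≤ r ^ 2 := by nlinarith
  have hq : C * ε⁻¹ ^ 2 = C / ε ^ 2 := by rw [inv_pow, div_eq_mul_inv]
  have hFr : F' / r ^ 2 ≤ C * ε⁻¹ ^ 2 := by
    rw [hq]; exact div_le_div₀ hC hFC' (by positivity) hrε
  have hFd : 0 ≤ F / r ^ 2 := by positivity
  have hFd' : 0 ≤ F' / r ^ 2 := by positivity
  have hnum : w ^ 2 * B ^ 2 - A ^ 2 * w' ^ 2 ≤ w ^ 2 * (1 + C * ε⁻¹ ^ 2) := by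
    rw [hA2, hB2, hu, hu']
    have hF'le : w ^ 2 * (F' / r ^ 2) ≤ w ^ 2 * (C * ε⁻¹ ^ 2) :=
      mul_le_mul_of_nonneg_left hFr (sq_nonneg w)
    have h1 : 0 ≤ w' ^ 2 * (F / r ^ 2) := mul_nonneg (sq_nonneg w') hFd
    have h2 : 0 ≤ w' ^ 2 := sq_nonneg w'
    ring_nf
    ring_nf at hF'le h1
    linarith
  have hB2ge : 1 + w' ^ 2 ≤ B ^ 2 := by rw [hB2, hu']; nlinarith
  have hCε : 0 ≤ 1 + C * ε⁻¹ ^ 2 := by positivity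
  have key : (w * B - A * w') * (1 + w' ^ 2) ≤ (1 + C * ε⁻¹ ^ 2) * (w * B) := by
    rcases le_or_gt (w * B - A * w') 0 with h | h
    · have h1 : 0 ≤ (1 + C * ε⁻¹ ^ 2) * (w * B) := by positivity
      nlinarith [sq_nonneg w']
    · have hsum : 0 < w * B + A * w' := by positivity
      have e1 : (w * B - A * w') * (1 + w' ^ 2) * (w * B + A * w')
          = (w ^ 2 * B ^ 2 - A ^ 2 * w' ^ 2) * (1 + w' ^ 2) := by ring
      have e2 : (w ^ 2 * B ^ 2 - A ^ 2 * w' ^ 2) * (1 + w' ^ 2)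
          ≤ (w ^ 2 * (1 + C * ε⁻¹ ^ 2)) * (1 + w' ^ 2) :=
        mul_le_mul_of_nonneg_right hnum (by positivity)
      have e3 : (w ^ 2 * (1 + C * ε⁻¹ ^ 2)) * (1 + w' ^ 2)
          ≤ (w ^ 2 * (1 + C * ε⁻¹ ^ 2)) * B ^ 2 :=
        mul_le_mul_of_nonneg_left hB2ge (by positivity)
      have e4 : (w ^ 2 * (1 + C * ε⁻¹ ^ 2)) * B ^ 2
          ≤ (1 + C * ε⁻¹ ^ 2) * (w * B) * (w * B + A * w') := by
        nlinarith [mul_nonneg (mul_nonneg hA0 hw'.le) (mul_nonneg hw.le hB0)]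
      have := le_of_mul_le_mul_right (by linarith [e1 ▸ le_trans e2 (le_trans e3 e4)] :
        (w * B - A * w') * (1 + w' ^ 2) * (w * B + A * w')
          ≤ (1 + C * ε⁻¹ ^ 2) * (w * B) * (w * B + A * w')) hsum
      exact this
  have final : w' * ((w * B - A * w') * (1 + w' ^ 2)) ≤ w' * ((1 + C * ε⁻¹ ^ 2) * (w * B)) :=
    mul_le_mul_of_nonneg_left key hw'.le
  have h1w : (0:ℝ) < 1 + w' ^ 2 := by positivity
  have hgoal : (w * w' - A * w' ^ 2 / B) * (B * (1 + w' ^ 2))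
      ≤ ((1 + C * ε⁻¹ ^ 2) * (w * w' / (1 + w' ^ 2))) * (B * (1 + w' ^ 2)) := by
    have lhs_eq : (w * w' - A * w' ^ 2 / B) * (B * (1 + w' ^ 2))
        = w' * ((w * B - A * w') * (1 + w' ^ 2)) := by
      field_simp
    have rhs_eq : ((1 + C * ε⁻¹ ^ 2) * (w * w' / (1 + w' ^ 2))) * (B * (1 + w' ^ 2))
        = w' * ((1 + C * ε⁻¹ ^ 2) * (w * B)) := by
      field_simp
    rw [lhs_eq, rhs_eq]; exact final
  exact le_of_mul_le_mul_right hgoal (by positivity)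
end

section
/- Let ε > 0, C ≥ 0, r ≥ ε, and let w < 0, w̃ ≤ 0, F, F̃ ∈ [0, C]. With u² := w² + F/r² and ũ² := w̃² + F̃/r², one has w·w̃ − √(1+u²)·w̃²/√(1+ũ²) ≥ −(1 + C·ε⁻²)·|w̃|/√(1+w²). -/
open Real

theorem integrand_lower_bound_both_nonpositive
    (ε C r w w' F F' u u' : ℝ)
    (hε : 0 < ε) (hC : 0 ≤ C) (hr : ε ≤ r)
    (hw : w < 0) (hw' : w' ≤ 0)
    (hF : F ∈ Set.Icc 0 C) (hF' : F' ∈ Set.Icc 0 C)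
    (hu : u ^ 2 = w ^ 2 + F / r ^ 2) (hu' : u' ^ 2 = w' ^ 2 + F' / r ^ 2) :
    -(1 + C * ε⁻¹ ^ 2) * |w'| / Real.sqrt (1 + w ^ 2) ≤
      w * w' - Real.sqrt (1 + u ^ 2) * w' ^ 2 / Real.sqrt (1 + u' ^ 2) := by
  obtain ⟨hF0, hFC⟩ := hF
  obtain ⟨hF'0, _⟩ := hF'
  have hr0 : (0:ℝ) < r := lt_of_lt_of_le hε hr
  set S1 := Real.sqrt (1 + u ^ 2) with hS1
  set S2 := Real.sqrt (1 + u' ^ 2) with hS2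
  set S3 := Real.sqrt (1 + w ^ 2) with hS3
  set A := Real.sqrt (1 + w ^ 2 + C / ε ^ 2) with hA
  set K := 1 + C * ε⁻¹ ^ 2 with hKdef
  have hS3pos : 0 < S3 := Real.sqrt_pos.2 (by positivity)
  have hS2pos : 0 < S2 := Real.sqrt_pos.2 (by nlinarith [sq_nonneg u'])
  have hS1nn : 0 ≤ S1 := Real.sqrt_nonneg _
  have ht : 0 ≤ -w' := by linarith
  have hdiv : F / r ^ 2 ≤ C / ε ^ 2 :=
    div_le_div₀ hC hFC (by positivity) (by nlinarith)
  have h1 : S1 ≤ A := Real.sqrt_le_sqrt (by rw [hu]; linarith)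
  have h2 : -w' ≤ S2 := by
    have hsq : (-w') ^ 2 ≤ 1 + u' ^ 2 := by
      have : 0 ≤ F' / r ^ 2 := by positivity
      rw [hu']; nlinarith
    calc -w' = Real.sqrt ((-w') ^ 2) := (Real.sqrt_sq ht).symm
      _ ≤ S2 := Real.sqrt_le_sqrt hsq
  have hS3A : S3 ≤ A := by
    apply Real.sqrt_le_sqrt
    have : 0 ≤ C / ε ^ 2 := by positivity
    linarith
  have hApos : 0 < A := lt_of_lt_of_le hS3pos hS3A
  have hAsq : A ^ 2 = 1 + w ^ 2 + C / ε ^ 2 := Real.sq_sqrt (by positivity)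
  have hS3sq : S3 ^ 2 = 1 + w ^ 2 := Real.sq_sqrt (by positivity)
  have hK0 : 0 ≤ K := by positivity
  have hden : 0 < A + -w := by linarith
  have key : A - -w ≤ K / S3 := by
    have hCe : C / ε ^ 2 = C * ε⁻¹ ^ 2 := by field_simp
    have heq : A - -w = K / (A + -w) := by
      rw [eq_div_iff (ne_of_gt hden)]
      have e : (A - -w) * (A + -w) = A ^ 2 - w ^ 2 := by ring
      rw [e, hAsq, hKdef, hCe]; ring
    rw [heq]
    exact div_le_div_of_nonneg_left hK0 hS3pos (by linarith)
  rw [abs_of_nonpos hw']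
  have step1 : S1 * w' ^ 2 / S2 ≤ A * -w' := by
    have h3 : w' ^ 2 / S2 ≤ -w' := by
      rw [div_le_iff₀ hS2pos]
      calc w' ^ 2 = -w' * -w' := by ring
        _ ≤ -w' * S2 := mul_le_mul_of_nonneg_left h2 ht
    calc S1 * w' ^ 2 / S2 = S1 * (w' ^ 2 / S2) := by ring
      _ ≤ S1 * -w' := by exact mul_le_mul_of_nonneg_left h3 hS1nn
      _ ≤ A * -w' := mul_le_mul_of_nonneg_right h1 ht
  have step2 : -K * -w' / S3 ≤ w * w' - A * -w' := by
    have h4 : -(K / S3) ≤ -w - A := by linarith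
    have h5 : -w' * -(K / S3) ≤ -w' * (-w - A) := mul_le_mul_of_nonneg_left h4 ht
    have e1 : -w' * -(K / S3) = -K * -w' / S3 := by ring
    have e2 : -w' * (-w - A) = w * w' - A * -w' := by ring
    linarith [h5, e1.ge, e2.le]
  linarith
end

section
/- Let f : ℝ³ × ℝ³ → ℝ be nonnegative, measurable and bounded by S, and suppose f(x, ·) is supported in a set V_x ⊂ ℝ³ of Lebesgue measure at most μ₀ for each x. Fix x with ‖x‖ = r ≥ ε, suppose F(x,ṽ) := r²‖ṽ‖² − (x⬝ṽ)² ≤ C on the support, and suppose the radial momenta w̃ := (x⬝ṽ)/r of points in the support lie in [0, P]. Then ∫ f(x,ṽ) · w·w̃/(1+w̃²) dṽ ≤ S · π C ε⁻² · w · (1/2)·ln(1+P²) for any w ≥ 0. -/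
open Real RealInnerProductSpace MeasureTheory

lemma aux_integral (w P : ℝ) (hP : 0 ≤ P) :
    ∫ t in Set.Icc (0:ℝ) P, w * t / (1 + t ^ 2)
      = w * ((1/2) * Real.log (1 + P ^ 2)) := by
  rw [MeasureTheory.integral_Icc_eq_integral_Ioc, ← intervalIntegral.integral_of_le hP]
  have h := intervalIntegral.integral_eq_sub_of_hasDerivAt
    (f := fun t : ℝ => w * ((1/2) * Real.log (1 + t ^ 2)))
    (f' := fun t : ℝ => w * t / (1 + t ^ 2)) (a := 0) (b := P)
    (fun t _ => by
      have hpos : (0:ℝ) < 1 + t ^ 2 := by positivity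
      have h1 : HasDerivAt (fun t : ℝ => 1 + t ^ 2) (2 * t) t := by
        simpa using ((hasDerivAt_pow 2 t).const_add 1)
      have h2 : HasDerivAt (fun t : ℝ => Real.log (1 + t ^ 2)) (2 * t / (1 + t ^ 2)) t :=
        h1.log (ne_of_gt hpos)
      have h3 := h2.const_mul (w * (1/2))
      convert h3 using 1
      · rfl
      · ext t; ring
      · field_simp)
    (by
      apply Continuous.intervalIntegrable
      exact (continuous_const.mul continuous_id).div
        (continuous_const.add (continuous_pow 2)) (fun t => by positivity))
  rw [h]
  simp [Real.log_one]

lemma aux_disk (c : ℝ) (hc : 0 ≤ c) :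
    MeasureTheory.volume {z : Fin 2 → ℝ | z 0 ^ 2 + z 1 ^ 2 ≤ c} = ENNReal.ofReal (c * π) := by
  have hD : MeasurableSet {z : Fin 2 → ℝ | z 0 ^ 2 + z 1 ^ 2 ≤ c} :=
    measurableSet_le (by measurability) measurable_const
  have hmp := (EuclideanSpace.volume_preserving_symm_measurableEquiv_toLp (Fin 2)).measure_preimage
    hD.nullMeasurableSet
  have hpre : (MeasurableEquiv.toLp 2 (Fin 2 → ℝ)).symm ⁻¹' {z : Fin 2 → ℝ | z 0 ^ 2 + z 1 ^ 2 ≤ c}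
      = Metric.closedBall (0 : EuclideanSpace ℝ (Fin 2)) (Real.sqrt c) := by
    ext u
    have hnorm : ‖u‖ ^ 2 = u 0 ^ 2 + u 1 ^ 2 := by
      rw [EuclideanSpace.norm_eq, Real.sq_sqrt (by positivity)]
      simp [Fin.sum_univ_two, sq_abs]
    simp only [Set.mem_preimage, Set.mem_setOf_eq, Metric.mem_closedBall, dist_zero_right]
    rw [show (MeasurableEquiv.toLp 2 (Fin 2 → ℝ)).symm u 0 = u 0 from rfl,
        show (MeasurableEquiv.toLp 2 (Fin 2 → ℝ)).symm u 1 = u 1 from rfl, ← hnorm]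
    exact (Real.le_sqrt (norm_nonneg u) hc).symm
  rw [hpre] at hmp
  rw [← hmp, EuclideanSpace.volume_closedBall]
  have h2 : Fintype.card (Fin 2) = 2 := Fintype.card_fin 2
  rw [h2]
  rw [show ((2:ℕ):ℝ) / 2 + 1 = 2 by norm_num, Real.Gamma_two]
  rw [← ENNReal.ofReal_pow (Real.sqrt_nonneg c), Real.sq_sqrt hc,
    Real.sq_sqrt Real.pi_nonneg, ← ENNReal.ofReal_mul hc]
  norm_num

set_option maxHeartbeats 2000000 in
theorem velocity_integral_bound
    (f : EuclideanSpace ℝ (Fin 3) → EuclideanSpace ℝ (Fin 3) → ℝ)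
    (S μ₀ ε C P r w : ℝ)
    (x : EuclideanSpace ℝ (Fin 3))
    (hmeas : Measurable (f x))
    (hf0 : ∀ y v, 0 ≤ f y v) (hfS : ∀ y v, f y v ≤ S)
    (hsuppmeas : ∀ y, volume (Function.support (f y)) ≤ ENNReal.ofReal μ₀)
    (hr : ‖x‖ = r) (hε : 0 < ε) (hrε : ε ≤ r)
    (hC : 0 ≤ C) (hP : 0 ≤ P)
    (hsupp : ∀ v, f x v ≠ 0 →
      r ^ 2 * ‖v‖ ^ 2 - ⟪x, v⟫ ^ 2 ≤ C ∧
      0 ≤ ⟪x, v⟫ / r ∧ ⟪x, v⟫ / r ≤ P)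
    (hw : 0 ≤ w)
    (hInt : Integrable (fun v => f x v * (w * (⟪x, v⟫ / r) / (1 + (⟪x, v⟫ / r) ^ 2)))) :
    (∫ v, f x v * (w * (⟪x, v⟫ / r) / (1 + (⟪x, v⟫ / r) ^ 2))) ≤
      S * (π * C * ε⁻¹ ^ 2) * w * ((1 / 2) * Real.log (1 + P ^ 2)) := by
  have hr0 : (0:ℝ) < r := lt_of_lt_of_le hε hrε
  have hS : (0:ℝ) ≤ S := le_trans (hf0 x 0) (hfS x 0)
  have hL : (0:ℝ) ≤ Real.log (1 + P ^ 2) := Real.log_nonneg (by nlinarith)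
  -- unit radial vector and adapted orthonormal basis
  set e₀ : EuclideanSpace ℝ (Fin 3) := (r⁻¹ : ℝ) • x with he₀
  have hne : ‖e₀‖ = 1 := by
    rw [he₀, norm_smul, hr, norm_inv, Real.norm_eq_abs, abs_of_pos hr0,
      inv_mul_cancel₀ hr0.ne']
  have hcard : Module.finrank ℝ (EuclideanSpace ℝ (Fin 3)) = Fintype.card (Fin 3) := by
    simp [finrank_euclideanSpace]
  have horth : Orthonormal ℝ (({0} : Set (Fin 3)).restrict (fun _ : Fin 3 => e₀)) := by
    constructor
    · intro i; exact hne
    · intro i j hij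
      exfalso
      apply hij
      have h1 : (i : Fin 3) = 0 := i.2
      have h2 : (j : Fin 3) = 0 := j.2
      exact Subtype.ext (h1.trans h2.symm)
  obtain ⟨b, hb⟩ := horth.exists_orthonormalBasis_extension_of_card_eq hcard
  have hb0 : b 0 = e₀ := hb 0 rfl
  have hcoord : ∀ v : EuclideanSpace ℝ (Fin 3), b.repr v 0 = ⟪x, v⟫ / r := by
    intro v
    rw [OrthonormalBasis.repr_apply_apply, hb0, he₀, real_inner_smul_left, inv_mul_eq_div]
  have hnormsq : ∀ v : EuclideanSpace ℝ (Fin 3),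
      ‖v‖ ^ 2 = (b.repr v 0) ^ 2 + (b.repr v 1) ^ 2 + (b.repr v 2) ^ 2 := by
    intro v
    have h1 : ‖v‖ = ‖b.repr v‖ := (b.repr.norm_map v).symm
    rw [h1, EuclideanSpace.norm_eq, Real.sq_sqrt (by positivity)]
    simp [Fin.sum_univ_three, sq_abs]
  -- the bounding function
  set c : ℝ := C / r ^ 2 with hcdef
  have hc : 0 ≤ c := by positivity
  set F1 : ℝ → ENNReal := (Set.Icc (0:ℝ) P).indicator
    (fun t => ENNReal.ofReal (w * t / (1 + t ^ 2))) with hF1def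
  set D : Set (Fin 2 → ℝ) := {z | z 0 ^ 2 + z 1 ^ 2 ≤ c} with hDdef
  set F2 : (Fin 2 → ℝ) → ENNReal := D.indicator (fun _ => ENNReal.ofReal S) with hF2def
  have hDmeas : MeasurableSet D := measurableSet_le (by fun_prop) measurable_const
  set Fpi : (Fin 3 → ℝ) → ENNReal :=
    fun y => F1 (y 0) * F2 (fun j => y (Fin.succAbove 0 j)) with hFpidef
  -- pointwise bound
  have hgnn : ∀ t : ℝ, 0 ≤ t → 0 ≤ w * t / (1 + t ^ 2) := fun t ht =>
    div_nonneg (mul_nonneg hw ht) (by positivity)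
  have hptw : ∀ v : EuclideanSpace ℝ (Fin 3),
      ENNReal.ofReal (f x v * (w * (⟪x, v⟫ / r) / (1 + (⟪x, v⟫ / r) ^ 2)))
        ≤ Fpi (fun i => b.repr v i) := by
    intro v
    by_cases hv : f x v = 0
    · simp [hv]
    · obtain ⟨h1, h2, h3⟩ := hsupp v hv
      have hb0v : b.repr v 0 = ⟪x, v⟫ / r := hcoord v
      have mem1 : b.repr v 0 ∈ Set.Icc (0:ℝ) P := by rw [hb0v]; exact ⟨h2, h3⟩
      have hip : ⟪x, v⟫ = r * b.repr v 0 := by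
        rw [hb0v]; field_simp
      have mem2 : (fun j : Fin 2 => b.repr v (Fin.succAbove 0 j)) ∈ D := by
        have hs0 : Fin.succAbove (0 : Fin 3) (0 : Fin 2) = 1 := rfl
        have hs1 : Fin.succAbove (0 : Fin 3) (1 : Fin 2) = 2 := rfl
        show (b.repr v (Fin.succAbove 0 0)) ^ 2 + (b.repr v (Fin.succAbove 0 1)) ^ 2 ≤ c
        rw [hs0, hs1, hcdef, le_div_iff₀ (by positivity : (0:ℝ) < r ^ 2)]
        have hn := hnormsq v
        rw [hip] at h1
        nlinarith [h1, hn]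
      show _ ≤ F1 ((fun i => b.repr v i) 0) * F2 (fun j => (fun i => b.repr v i) (Fin.succAbove 0 j))
      rw [hF1def, hF2def, Set.indicator_of_mem mem1, Set.indicator_of_mem mem2]
      have hg0 : 0 ≤ w * (b.repr v 0) / (1 + (b.repr v 0) ^ 2) := hgnn _ mem1.1
      rw [← ENNReal.ofReal_mul hg0]
      apply ENNReal.ofReal_le_ofReal
      rw [hb0v]
      calc f x v * (w * (⟪x, v⟫ / r) / (1 + (⟪x, v⟫ / r) ^ 2))
          ≤ S * (w * (⟪x, v⟫ / r) / (1 + (⟪x, v⟫ / r) ^ 2)) := by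
            apply mul_le_mul_of_nonneg_right (hfS x v)
            rw [← hb0v]; exact hg0
        _ = w * (⟪x, v⟫ / r) / (1 + (⟪x, v⟫ / r) ^ 2) * S := by ring
  -- rewrite the integral via the lower Lebesgue integral
  have hnnae : 0 ≤ᵐ[volume] fun v : EuclideanSpace ℝ (Fin 3) =>
      f x v * (w * (⟪x, v⟫ / r) / (1 + (⟪x, v⟫ / r) ^ 2)) := by
    apply Filter.Eventually.of_forall
    intro v
    by_cases hv : f x v = 0
    · simp [hv]
    · exact mul_nonneg (hf0 x v) (hgnn _ (hsupp v hv).2.1)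
  have heq := integral_eq_lintegral_of_nonneg_ae hnnae hInt.1
  rw [heq]
  -- bound the lintegral
  have hstep1 : (∫⁻ v, ENNReal.ofReal (f x v * (w * (⟪x, v⟫ / r) / (1 + (⟪x, v⟫ / r) ^ 2))))
      ≤ ∫⁻ v, Fpi (fun i => b.repr v i) := lintegral_mono hptw
  have hemb : MeasurableEmbedding (b.repr : EuclideanSpace ℝ (Fin 3) → EuclideanSpace ℝ (Fin 3)) :=
    b.repr.toHomeomorph.measurableEmbedding
  have hstep2 : (∫⁻ v, Fpi (fun i => b.repr v i))
      = ∫⁻ u : EuclideanSpace ℝ (Fin 3), Fpi (fun i => u i) :=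
    b.measurePreserving_repr.lintegral_comp_emb hemb (fun u => Fpi (fun i => u i))
  have hstep3 : (∫⁻ u : EuclideanSpace ℝ (Fin 3), Fpi (fun i => u i)) = ∫⁻ y : Fin 3 → ℝ, Fpi y :=
    (EuclideanSpace.volume_preserving_symm_measurableEquiv_toLp (Fin 3)).lintegral_comp_emb
      (MeasurableEquiv.measurableEmbedding _) Fpi
  set e3 := MeasurableEquiv.piFinSuccAbove (fun _ : Fin 3 => ℝ) 0 with he3
  have hstep4 : (∫⁻ y : Fin 3 → ℝ, Fpi y)
      = ∫⁻ p : ℝ × (Fin 2 → ℝ), F1 p.1 * F2 p.2 := by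
    rw [← (volume_preserving_piFinSuccAbove (fun _ : Fin 3 => ℝ) 0).lintegral_comp_emb
      e3.measurableEmbedding (fun p => F1 p.1 * F2 p.2)]
    rfl
  -- measurability
  have hcont : Continuous (fun t : ℝ => w * t / (1 + t ^ 2)) := by
    apply Continuous.div
    · exact continuous_const.mul continuous_id
    · exact continuous_const.add (continuous_pow 2)
    · intro t; positivity
  have hgmeas : Measurable fun t : ℝ => w * t / (1 + t ^ 2) := hcont.measurable
  have hF1meas : Measurable F1 :=
    (ENNReal.measurable_ofReal.comp hgmeas).indicator measurableSet_Icc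
  have hF2meas : Measurable F2 := measurable_const.indicator hDmeas
  have hstep5 : (∫⁻ p : ℝ × (Fin 2 → ℝ), F1 p.1 * F2 p.2)
      = (∫⁻ t : ℝ, F1 t) * ∫⁻ z : Fin 2 → ℝ, F2 z :=
    lintegral_prod_mul hF1meas.aemeasurable hF2meas.aemeasurable
  -- compute the two factors
  have hval1 : (∫⁻ t : ℝ, F1 t) = ENNReal.ofReal (w * ((1/2) * Real.log (1 + P ^ 2))) := by
    rw [hF1def, lintegral_indicator measurableSet_Icc,
      ← ofReal_integral_eq_lintegral_ofReal hcont.integrableOn_Icc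
        ((ae_restrict_iff' measurableSet_Icc).2 (Filter.Eventually.of_forall
          fun t ht => hgnn t ht.1)),
      aux_integral w P hP]
  have hval2 : (∫⁻ z : Fin 2 → ℝ, F2 z) = ENNReal.ofReal S * ENNReal.ofReal (c * π) := by
    rw [hF2def, lintegral_indicator_const hDmeas, hDdef, aux_disk c hc]
  -- assemble
  have hfin : (∫⁻ v, ENNReal.ofReal (f x v * (w * (⟪x, v⟫ / r) / (1 + (⟪x, v⟫ / r) ^ 2))))
      ≤ ENNReal.ofReal (w * ((1/2) * Real.log (1 + P ^ 2)) * (S * (c * π))) := by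
    calc (∫⁻ v, ENNReal.ofReal (f x v * (w * (⟪x, v⟫ / r) / (1 + (⟪x, v⟫ / r) ^ 2))))
        ≤ ∫⁻ v, Fpi (fun i => b.repr v i) := hstep1
      _ = ENNReal.ofReal (w * ((1/2) * Real.log (1 + P ^ 2))) *
            (ENNReal.ofReal S * ENNReal.ofReal (c * π)) := by
          rw [hstep2, hstep3, hstep4, hstep5, hval1, hval2]
      _ = ENNReal.ofReal (w * ((1/2) * Real.log (1 + P ^ 2)) * (S * (c * π))) := by
          rw [← ENNReal.ofReal_mul hS, ← ENNReal.ofReal_mul (by positivity)]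
  have htfin := ENNReal.toReal_mono ENNReal.ofReal_ne_top hfin
  rw [ENNReal.toReal_ofReal (by positivity)] at htfin
  refine le_trans htfin ?_
  -- final algebraic comparison
  have hinv : r⁻¹ ≤ ε⁻¹ := by
    apply inv_anti₀ hε hrε
  have hinv2 : r⁻¹ ^ 2 ≤ ε⁻¹ ^ 2 := pow_le_pow_left₀ (inv_nonneg.2 hr0.le) hinv 2
  have hid : w * ((1/2) * Real.log (1 + P ^ 2)) * (S * (c * π))
      = S * (π * C * r⁻¹ ^ 2) * w * ((1/2) * Real.log (1 + P ^ 2)) := by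
    rw [hcdef]; field_simp
  rw [hid]
  have hmono : S * (π * C * r⁻¹ ^ 2) ≤ S * (π * C * ε⁻¹ ^ 2) := by
    apply mul_le_mul_of_nonneg_left _ hS
    exact mul_le_mul_of_nonneg_left hinv2 (mul_nonneg Real.pi_nonneg hC)
  apply mul_le_mul_of_nonneg_right _ (by positivity)
  exact mul_le_mul_of_nonneg_right hmono hw
end
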